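/- For every real p > 0, every real ν > 0, and every natural number M ≥ 1, the function h ↦ h⁻¹ * ( (p + h) * ((M : ℝ) * Real.exp (−h/(p+h)) * Real.exp (−ν*h/(p+h)) + 1) / ((M : ℝ) * Real.exp (−ν*h/(p+h)) + 1) − p ) tends to 1/(M+1) as h tends to 0 from the left (i.e. along the filter 𝓝[<] 0). -/

import Mathlib

open Filter

/-- "From below" one-sided limit in the proof of shadow-lifting for the STL
conjunction (case `p_min < 0`). -/
theorem stl_and_lt0_shadow_lifting_at_left (p ν : ℝ) (hp : 0 < p) (hν : 0 < ν)
    (M : ℕ) (hM : 1 ≤ M) :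
    Tendsto
      (fun h : ℝ =>
        h⁻¹ *
          ((p + h) *
              ((M : ℝ) * Real.exp (-h / (p + h)) * Real.exp (-ν * h / (p + h)) + 1) /
              ((M : ℝ) * Real.exp (-ν * h / (p + h)) + 1) - p))
      (nhdsWithin 0 (Set.Iio 0)) (nhds (1 / ((M : ℝ) + 1))) := by
  set g : ℝ → ℝ := fun h =>
    (p + h) * ((M : ℝ) * Real.exp (-h / (p + h)) * Real.exp (-ν * h / (p + h)) + 1) /
      ((M : ℝ) * Real.exp (-ν * h / (p + h)) + 1) with hg
  have hM1 : ((M : ℝ) + 1) ≠ 0 := by positivity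
  have hp0 : p + 0 ≠ 0 := by simpa using hp.ne'
  have hpa : HasDerivAt (fun h : ℝ => p + h) 1 0 := by
    simpa using (hasDerivAt_id (0 : ℝ)).const_add p
  have hu : HasDerivAt (fun h : ℝ => -h / (p + h)) (-1 / p) 0 := by
    have := ((hasDerivAt_id (0 : ℝ)).neg).div hpa hp0
    refine this.congr_deriv ?_
    simp only [id, Pi.neg_apply, neg_zero, mul_zero, sub_zero]
    field_simp
    ring
  have hv : HasDerivAt (fun h : ℝ => -ν * h / (p + h)) (-ν / p) 0 := by
    have := (((hasDerivAt_id (0 : ℝ)).const_mul (-ν))).div hpa hp0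
    refine this.congr_deriv ?_
    simp only [id, Pi.neg_apply, neg_zero, mul_zero, sub_zero]
    field_simp
    ring
  have heu : HasDerivAt (fun h : ℝ => Real.exp (-h / (p + h))) (-1 / p) 0 := by
    have := hu.exp
    simpa using this
  have hev : HasDerivAt (fun h : ℝ => Real.exp (-ν * h / (p + h))) (-ν / p) 0 := by
    have := hv.exp
    simpa using this
  have hnum : HasDerivAt
      (fun h : ℝ => (p + h) * ((M : ℝ) * Real.exp (-h / (p + h)) * Real.exp (-ν * h / (p + h)) + 1))
      (((M : ℝ) + 1) + p * ((M : ℝ) * (-1 / p) * 1 + (M : ℝ) * 1 * (-ν / p))) 0 := by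
    have hinner : HasDerivAt
        (fun h : ℝ => (M : ℝ) * Real.exp (-h / (p + h)) * Real.exp (-ν * h / (p + h)) + 1)
        ((M : ℝ) * (-1 / p) * 1 + (M : ℝ) * 1 * (-ν / p)) 0 := by
      have := ((heu.const_mul (M : ℝ)).mul hev).add_const 1
      simpa using this
    have := hpa.mul hinner
    refine this.congr_deriv ?_
    simp
  have hden : HasDerivAt
      (fun h : ℝ => (M : ℝ) * Real.exp (-ν * h / (p + h)) + 1) ((M : ℝ) * (-ν / p)) 0 := by
    have := (hev.const_mul (M : ℝ)).add_const 1
    simpa using this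
  have hden0 : ((M : ℝ) * Real.exp (-ν * 0 / (p + 0)) + 1) ≠ 0 := by
    simp
    positivity
  have hgd : HasDerivAt g (1 / ((M : ℝ) + 1)) 0 := by
    have := hnum.div hden hden0
    refine this.congr_deriv ?_
    simp
    field_simp
    ring
  have hg0 : g 0 = p := by
    simp only [hg]
    simp
    field_simp
  have := hasDerivAt_iff_tendsto_slope.mp hgd
  have h2 : Tendsto (slope g 0) (nhdsWithin 0 (Set.Iio 0)) (nhds (1 / ((M : ℝ) + 1))) :=
    this.mono_left (nhdsWithin_mono 0 (by intro x hx; simpa using ne_of_lt hx))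
  refine h2.congr fun h => ?_
  simp only [slope, vsub_eq_sub, hg0, sub_zero, smul_eq_mul]
  rfl
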